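/- arXiv:1105.6305 — 2 statements merged into one kernel-verified Lean document; each statement's English description precedes it below -/
import Mathlib

section
/- Let Γ be a simple graph on a finite vertex set V, let s, t ∈ V be distinct vertices not adjacent in Γ, and let Γ ∪ e be Γ with the edge e = (s, t) added. Let 𝒞 be the family consisting of all maximal cliques of Γ together with all sets of the form (ℓ_s ∩ ℓ_t) ∪ {s, t}, where ℓ_s and ℓ_t range over the maximal cliques of Γ containing s and t respectively. Then the maximal cliques of Γ ∪ e are exactly the members of 𝒞 that are maximal in 𝒞 with respect to set inclusion. -/
/-- A maximal clique of a simple graph: a clique not properly contained in any other clique. -/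
def IsMaxClique {V : Type*} (G : SimpleGraph V) (c : Set V) : Prop :=
  G.IsClique c ∧ ∀ d : Set V, G.IsClique d → c ⊆ d → c = d

/-- The candidate family `𝒞`: all maximal cliques of `Γ`, together with all sets
`(ℓs ∩ ℓt) ∪ {s, t}` for maximal cliques `ℓs ∋ s` and `ℓt ∋ t` of `Γ`. -/
def candidateFamily {V : Type*} (Γ : SimpleGraph V) (s t : V) : Set (Set V) :=
  {c | IsMaxClique Γ c} ∪
    {c | ∃ ℓs ℓt : Set V, IsMaxClique Γ ℓs ∧ IsMaxClique Γ ℓt ∧ s ∈ ℓs ∧ t ∈ ℓt ∧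
      c = (ℓs ∩ ℓt) ∪ {s, t}}

/-- Every clique of a graph on a finite vertex set extends to a maximal clique. -/
lemma exists_maxClique_superset {V : Type*} [Fintype V] (G : SimpleGraph V) (c : Set V)
    (hc : G.IsClique c) : ∃ d : Set V, IsMaxClique G d ∧ c ⊆ d := by
  obtain ⟨d, ⟨hd, hcd⟩, hmax⟩ :=
    Set.Finite.exists_maximalFor (id : Set V → Set V)
      {d | G.IsClique d ∧ c ⊆ d} (Set.toFinite _) ⟨c, hc, subset_rfl⟩
  exact ⟨d, ⟨hd, fun d' hd' hsub => subset_antisymm hsub (hmax ⟨hd', hcd.trans hsub⟩ hsub)⟩, hcd⟩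

/-- Every member of the candidate family is a clique of `Γ ⊔ edge s t`. -/
lemma cand_clique {V : Type*} (Γ : SimpleGraph V) (s t : V) (hst : s ≠ t)
    {m : Set V} (hm : m ∈ candidateFamily Γ s t) :
    (Γ ⊔ SimpleGraph.edge s t).IsClique m := by
  rcases hm with hm | ⟨ℓs, ℓt, hℓs, hℓt, hs, ht, rfl⟩
  · exact hm.1.mono le_sup_left
  · intro x hx y hy hxy
    have adjΓ : ∀ {a b : V}, Γ.Adj a b → (Γ ⊔ SimpleGraph.edge s t).Adj a b :=
      fun h => (SimpleGraph.sup_adj _ _ _ _).mpr (Or.inl h)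
    have hAst : (Γ ⊔ SimpleGraph.edge s t).Adj s t :=
      (SimpleGraph.sup_adj _ _ _ _).mpr (Or.inr ((SimpleGraph.edge_adj s t s t).mpr
        ⟨Or.inl ⟨rfl, rfl⟩, hst⟩))
    rcases hx with hx | hx | hx <;> rcases hy with hy | hy | hy
    · exact adjΓ (hℓs.1 hx.1 hy.1 hxy)
    · rw [hy]; exact adjΓ (hℓs.1 hx.1 hs (hy ▸ hxy))
    · rw [hy]; exact adjΓ (hℓt.1 hx.2 ht (hy ▸ hxy))
    · rw [hx]; exact adjΓ (hℓs.1 hs hy.1 (hx ▸ hxy))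
    · exact absurd (hx.trans hy.symm) hxy
    · rw [hx, hy]; exact hAst
    · rw [hx]; exact adjΓ (hℓt.1 ht hy.2 (hx ▸ hxy))
    · rw [hx, hy]; exact hAst.symm
    · exact absurd (hx.trans hy.symm) hxy

/-- Every maximal clique of `Γ ⊔ edge s t` belongs to the candidate family. -/
lemma maxClique_mem_cand {V : Type*} [Fintype V] (Γ : SimpleGraph V) (s t : V) (hst : s ≠ t)
    (hadj : ¬ Γ.Adj s t) {ℓ : Set V} (hℓ : IsMaxClique (Γ ⊔ SimpleGraph.edge s t) ℓ) :
    ℓ ∈ candidateFamily Γ s t := by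
  by_cases hboth : s ∈ ℓ ∧ t ∈ ℓ
  · obtain ⟨hsℓ, htℓ⟩ := hboth
    -- ℓ \ {t} and ℓ \ {s} are Γ-cliques
    have hA : Γ.IsClique (ℓ \ {t}) := by
      intro x hx y hy hxy
      rcases (SimpleGraph.sup_adj _ _ _ _).mp (hℓ.1 hx.1 hy.1 hxy) with h | h
      · exact h
      · rw [SimpleGraph.edge_adj] at h
        rcases h.1 with ⟨rfl, rfl⟩ | ⟨rfl, rfl⟩
        · exact absurd rfl hy.2
        · exact absurd rfl hx.2
    have hB : Γ.IsClique (ℓ \ {s}) := by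
      intro x hx y hy hxy
      rcases (SimpleGraph.sup_adj _ _ _ _).mp (hℓ.1 hx.1 hy.1 hxy) with h | h
      · exact h
      · rw [SimpleGraph.edge_adj] at h
        rcases h.1 with ⟨rfl, rfl⟩ | ⟨rfl, rfl⟩
        · exact absurd rfl hx.2
        · exact absurd rfl hy.2
    obtain ⟨ℓs, hℓs, hAs⟩ := exists_maxClique_superset Γ _ hA
    obtain ⟨ℓt, hℓt, hBt⟩ := exists_maxClique_superset Γ _ hB
    have hsℓs : s ∈ ℓs := hAs ⟨hsℓ, hst⟩
    have htℓt : t ∈ ℓt := hBt ⟨htℓ, fun h => hst h.symm⟩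
    have hmem : ((ℓs ∩ ℓt) ∪ {s, t} : Set V) ∈ candidateFamily Γ s t :=
      Or.inr ⟨ℓs, ℓt, hℓs, hℓt, hsℓs, htℓt, rfl⟩
    have hsub : ℓ ⊆ (ℓs ∩ ℓt) ∪ {s, t} := by
      intro x hx
      by_cases hxs : x = s
      · exact Or.inr (Or.inl hxs)
      by_cases hxt : x = t
      · exact Or.inr (Or.inr hxt)
      exact Or.inl ⟨hAs ⟨hx, hxt⟩, hBt ⟨hx, hxs⟩⟩
    have := hℓ.2 _ (cand_clique Γ s t hst hmem) hsub
    rw [this]; exact hmem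
  · -- ℓ is a Γ-clique
    have hΓ : Γ.IsClique ℓ := by
      intro x hx y hy hxy
      rcases (SimpleGraph.sup_adj _ _ _ _).mp (hℓ.1 hx hy hxy) with h | h
      · exact h
      · exfalso
        rw [SimpleGraph.edge_adj] at h
        rcases h.1 with ⟨rfl, rfl⟩ | ⟨rfl, rfl⟩
        · exact hboth ⟨hx, hy⟩
        · exact hboth ⟨hy, hx⟩
    exact Or.inl ⟨hΓ, fun d hd hsub => hℓ.2 d (hd.mono le_sup_left) hsub⟩

/-- The maximal cliques of `Γ ∪ e` are exactly the members of `𝒞` that are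
maximal in `𝒞` with respect to set inclusion. -/
theorem statement_6 {V : Type*} [Fintype V] (Γ : SimpleGraph V) (s t : V) (hst : s ≠ t)
    (hadj : ¬ Γ.Adj s t) (ℓ : Set V) :
    IsMaxClique (Γ ⊔ SimpleGraph.edge s t) ℓ ↔
      ℓ ∈ candidateFamily Γ s t ∧
        ∀ m ∈ candidateFamily Γ s t, ℓ ⊆ m → ℓ = m := by
  constructor
  · intro hℓ
    refine ⟨maxClique_mem_cand Γ s t hst hadj hℓ, fun m hm hsub => ?_⟩
    exact hℓ.2 m (cand_clique Γ s t hst hm) hsub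
  · rintro ⟨hmem, hmax⟩
    refine ⟨cand_clique Γ s t hst hmem, fun d hd hsub => ?_⟩
    obtain ⟨d', hd', hdd'⟩ := exists_maxClique_superset _ d hd
    have hmemd' := maxClique_mem_cand Γ s t hst hadj hd'
    have hℓd' := hmax d' hmemd' (hsub.trans hdd')
    exact subset_antisymm hsub (hℓd' ▸ hdd')
end

section
/- Let Γ be a simple graph on a finite vertex set V, let s, t ∈ V be distinct vertices not adjacent in Γ, and let Γ ∪ e be Γ with the edge e = (s, t) added. If ℓ is a maximal clique of Γ that is not contained in any set of the form (ℓ_s ∩ ℓ_t) ∪ {s, t}, where ℓ_s and ℓ_t are maximal cliques of Γ with s ∈ ℓ_s and t ∈ ℓ_t, then ℓ is a maximal clique of Γ ∪ e. -/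
lemma exists_maxclique_superset {V : Type*} [Fintype V] (G : SimpleGraph V) (c : Set V)
    (hc : G.IsClique c) : ∃ m : Set V, IsMaxClique G m ∧ c ⊆ m := by
  have hfin : ({d : Set V | G.IsClique d ∧ c ⊆ d}).Finite := Set.toFinite _
  obtain ⟨m, hm, hmax⟩ := hfin.exists_maximalFor id _ ⟨c, hc, subset_rfl⟩
  refine ⟨m, ⟨hm.1, fun d hd hsub => le_antisymm hsub (hmax ⟨hd, hm.2.trans hsub⟩ hsub)⟩, hm.2⟩

/-- If `ℓ` is a maximal clique of `Γ` not contained in any set of the form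
`(ℓs ∩ ℓt) ∪ {s, t}` with `ℓs ∋ s`, `ℓt ∋ t` maximal cliques of `Γ`, then `ℓ` is a
maximal clique of `Γ ∪ e`. -/
theorem statement_13 {V : Type*} [Fintype V] (Γ : SimpleGraph V) (s t : V) (hst : s ≠ t)
    (hadj : ¬ Γ.Adj s t) (ℓ : Set V) (hℓ : IsMaxClique Γ ℓ)
    (hnot : ∀ ℓs ℓt : Set V, IsMaxClique Γ ℓs → IsMaxClique Γ ℓt → s ∈ ℓs → t ∈ ℓt →
      ¬ ℓ ⊆ (ℓs ∩ ℓt) ∪ {s, t}) :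
    IsMaxClique (Γ ⊔ SimpleGraph.edge s t) ℓ := by
  constructor
  · exact hℓ.1.mono le_sup_left
  · intro d hd hsub
    -- key property of adjacency in the sup
    have key : ∀ u ∈ d, ∀ v ∈ d, u ≠ v → ¬(u = s ∧ v = t) → ¬(u = t ∧ v = s) → Γ.Adj u v := by
      intro u hu v hv huv h1 h2
      have := hd hu hv huv
      rw [SimpleGraph.sup_adj, SimpleGraph.edge_adj] at this
      tauto
    by_cases hds : s ∈ d
    · by_cases hdt : t ∈ d
      · exfalso
        have hcs : Γ.IsClique (d \ {t}) := by
          intro u hu v hv huv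
          exact key u hu.1 v hv.1 huv (fun h => hv.2 h.2) (fun h => hu.2 h.1)
        have hct : Γ.IsClique (d \ {s}) := by
          intro u hu v hv huv
          exact key u hu.1 v hv.1 huv (fun h => hu.2 h.1) (fun h => hv.2 h.2)
        obtain ⟨ℓs, hℓs, hsubs⟩ := exists_maxclique_superset Γ _ hcs
        obtain ⟨ℓt, hℓt, hsubt⟩ := exists_maxclique_superset Γ _ hct
        refine hnot ℓs ℓt hℓs hℓt (hsubs ⟨hds, hst⟩) (hsubt ⟨hdt, hst.symm⟩) ?_
        intro x hx
        by_cases hxs : x = s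
        · exact Or.inr (Or.inl hxs)
        by_cases hxt : x = t
        · exact Or.inr (Or.inr hxt)
        exact Or.inl ⟨hsubs ⟨hsub hx, hxt⟩, hsubt ⟨hsub hx, hxs⟩⟩
      · refine hℓ.2 d ?_ hsub
        intro u hu v hv huv
        exact key u hu v hv huv (fun h => hdt (h.2 ▸ hv)) (fun h => hdt (h.1 ▸ hu))
    · refine hℓ.2 d ?_ hsub
      intro u hu v hv huv
      exact key u hu v hv huv (fun h => hds (h.1 ▸ hu)) (fun h => hds (h.2 ▸ hv))
end
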